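/- arXiv:2002.00076 — 4 statements merged into one kernel-verified Lean document; each statement's English description precedes it below -/
import Mathlib

section
/- Let (Ω,d) be a separable metric space and μ a finite Borel measure on Ω. Suppose there exists δ > 0 such that every Borel set A ⊆ Ω satisfies either μ(A) = 0 or μ(A) ≥ δ. Then there exist a finite set of points x_1, …, x_N ∈ Ω and real numbers μ_1, …, μ_N with each μ_i ≥ δ such that μ = Σ_{i=1}^N μ_i δ_{x_i}, where δ_x denotes the Dirac measure at x. -/
open MeasureTheory ENNReal Filter Topology

lemma aux_step {Ω : Type*} [MetricSpace Ω] [MeasurableSpace Ω] [BorelSpace Ω]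
    (μ : Measure Ω) (u : ℕ → Ω) (hu : DenseRange u)
    (B : Set Ω) (hpos : 0 < μ B) (r : ℝ) (hr : 0 < r) :
    ∃ y : Ω, 0 < μ (B ∩ Metric.ball y r) := by
  by_contra h
  push_neg at h
  have hsub : B ⊆ ⋃ n, B ∩ Metric.ball (u n) r := by
    intro z hz
    obtain ⟨n, hn⟩ := hu.exists_dist_lt z hr
    exact Set.mem_iUnion.2 ⟨n, hz, by simpa [Metric.mem_ball, dist_comm] using hn⟩
  have : μ B = 0 := by
    refine le_antisymm (le_trans (measure_mono hsub) ?_) zero_le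
    have : μ (⋃ n, B ∩ Metric.ball (u n) r) = 0 :=
      measure_iUnion_null fun n => le_antisymm (h (u n)) zero_le
    simp [this]
  exact hpos.ne' this

lemma aux_atom {Ω : Type*} [MetricSpace Ω] [TopologicalSpace.SeparableSpace Ω]
    [MeasurableSpace Ω] [BorelSpace Ω]
    (μ : Measure Ω) [IsFiniteMeasure μ]
    (δ : ℝ) (hδ : 0 < δ)
    (hgap : ∀ A : Set Ω, MeasurableSet A → μ A = 0 ∨ ENNReal.ofReal δ ≤ μ A)
    (A : Set Ω) (hA : MeasurableSet A) (hpos : 0 < μ A) :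
    ∃ x ∈ A, ENNReal.ofReal δ ≤ μ {x} := by
  have hne : Nonempty Ω := by
    rcases Set.eq_empty_or_nonempty A with rfl | ⟨z, _⟩
    · simp at hpos
    · exact ⟨z⟩
  obtain ⟨u, hu⟩ := TopologicalSpace.exists_dense_seq Ω
  -- recursive construction of nested sets
  let P := {B : Set Ω // MeasurableSet B ∧ 0 < μ B}
  have rpos : ∀ n : ℕ, (0:ℝ) < 1 / (n + 1) := fun n => by positivity
  let step : ℕ → P → P := fun n B =>
    ⟨B.1 ∩ Metric.ball (Classical.choose (aux_step μ u hu B.1 B.2.2 (1/(n+1)) (rpos n)))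
        (1/(n+1)),
      B.2.1.inter Metric.isOpen_ball.measurableSet,
      Classical.choose_spec (aux_step μ u hu B.1 B.2.2 (1/(n+1)) (rpos n))⟩
  let g : ℕ → P := fun n => Nat.rec ⟨A, hA, hpos⟩ step n
  have hsucc : ∀ n, (g (n+1)).1 ⊆ (g n).1 := fun n => Set.inter_subset_left
  have hball : ∀ n, ∃ y : Ω, (g (n+1)).1 ⊆ Metric.ball y (1/(n+1)) :=
    fun n => ⟨_, Set.inter_subset_right⟩
  have hanti : Antitone fun n => (g n).1 := antitone_nat_of_succ_le hsucc
  have hge : ∀ n, ENNReal.ofReal δ ≤ μ (g n).1 := fun n => by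
    rcases hgap (g n).1 (g n).2.1 with h0 | h1
    · exact absurd h0 (g n).2.2.ne'
    · exact h1
  have hiInter : μ (⋂ n, (g n).1) = ⨅ n, μ (g n).1 :=
    hanti.measure_iInter (fun n => (g n).2.1.nullMeasurableSet) ⟨0, measure_ne_top μ _⟩
  have hSge : ENNReal.ofReal δ ≤ μ (⋂ n, (g n).1) := by
    rw [hiInter]; exact le_iInf hge
  have hSpos : 0 < μ (⋂ n, (g n).1) :=
    lt_of_lt_of_le (by simpa using ENNReal.ofReal_pos.2 hδ) hSge
  have hSne : (⋂ n, (g n).1).Nonempty := by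
    rcases Set.eq_empty_or_nonempty (⋂ n, (g n).1) with h | h
    · rw [h] at hSpos; simp at hSpos
    · exact h
  obtain ⟨x, hx⟩ := hSne
  have hxA : x ∈ A := hsucc 0 (Set.mem_iInter.1 hx 1)
  refine ⟨x, hxA, le_trans hSge (measure_mono ?_)⟩
  intro y hy
  have hdist : ∀ n : ℕ, dist x y < 2 / (n + 1) := by
    intro n
    obtain ⟨z, hz⟩ := hball n
    have hxz := hz (Set.mem_iInter.1 hx (n+1))
    have hyz := hz (Set.mem_iInter.1 hy (n+1))
    rw [Metric.mem_ball] at hxz hyz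
    calc dist x y ≤ dist x z + dist z y := dist_triangle x z y
      _ < 1/(n+1) + 1/(n+1) := by rw [dist_comm z y]; linarith
      _ = 2/(n+1) := by ring
  have : dist x y ≤ 0 := by
    by_contra hlt
    push_neg at hlt
    obtain ⟨n, hn⟩ := exists_nat_gt (2 / dist x y)
    have h1 : 2 / dist x y < (n:ℝ) + 1 := lt_trans hn (by linarith)
    have h2 : 2 < dist x y * ((n:ℝ)+1) := by
      rw [div_lt_iff₀ hlt] at h1; linarith
    have h3 := hdist n
    rw [lt_div_iff₀ (by positivity : (0:ℝ) < (n:ℝ)+1)] at h3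
    linarith
  have : x = y := by
    have := dist_nonneg (x := x) (y := y)
    have hd0 : dist x y = 0 := le_antisymm ‹dist x y ≤ 0› this
    exact dist_eq_zero.1 hd0
  simp [Set.mem_singleton_iff, this.symm]

/-- Lemma 2.4: if a finite Borel measure on a separable metric
space gives every Borel set measure either `0` or at least `δ > 0`, then it is
a finite sum of point masses of weights at least `δ`. -/
theorem finite_sum_of_diracs_of_gap
    {Ω : Type*} [MetricSpace Ω] [TopologicalSpace.SeparableSpace Ω]
    [MeasurableSpace Ω] [BorelSpace Ω]
    (μ : Measure Ω) [IsFiniteMeasure μ]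
    (δ : ℝ) (hδ : 0 < δ)
    (hgap : ∀ A : Set Ω, MeasurableSet A → μ A = 0 ∨ ENNReal.ofReal δ ≤ μ A) :
    ∃ (N : ℕ) (x : Fin N → Ω) (c : Fin N → ℝ),
      (∀ i, δ ≤ c i) ∧
      μ = ∑ i : Fin N, ENNReal.ofReal (c i) • Measure.dirac (x i) := by
  set T : Set Ω := {x : Ω | ENNReal.ofReal δ ≤ μ {x}} with hT_def
  have hT : T.Finite := by
    have := MeasureTheory.Measure.finite_const_le_meas_of_disjoint_iUnion μ
      (ε := ENNReal.ofReal δ) (ENNReal.ofReal_pos.2 hδ)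
      (As := fun x : Ω => {x}) (fun x => measurableSet_singleton x)
      (fun x y hxy => by simp [Function.onFun, Set.disjoint_singleton, hxy])
      (measure_ne_top μ _)
    exact this
  have hTm : MeasurableSet T := hT.measurableSet
  have hTc : μ Tᶜ = 0 := by
    rcases hgap Tᶜ hTm.compl with h | h
    · exact h
    · exfalso
      have hpos : 0 < μ Tᶜ := lt_of_lt_of_le (ENNReal.ofReal_pos.2 hδ) h
      obtain ⟨x, hxc, hx⟩ := aux_atom μ δ hδ hgap Tᶜ hTm.compl hpos
      exact hxc hx
  set N := hT.toFinset.card with hN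
  obtain e := hT.toFinset.equivFin
  refine ⟨N, fun i => (e.symm i).1, fun i => (μ {((e.symm i).1 : Ω)}).toReal, ?_, ?_⟩
  · intro i
    have hmem : ((e.symm i).1 : Ω) ∈ T := hT.mem_toFinset.1 (e.symm i).2
    have hle : ENNReal.ofReal δ ≤ μ {((e.symm i).1 : Ω)} := hmem
    have := ENNReal.toReal_mono (measure_ne_top μ _) hle
    simpa [ENNReal.toReal_ofReal hδ.le] using this
  · ext s hs
    have hofReal : ∀ i : Fin N,
        ENNReal.ofReal (μ {((e.symm i).1 : Ω)}).toReal = μ {((e.symm i).1 : Ω)} :=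
      fun i => ENNReal.ofReal_toReal (measure_ne_top μ _)
    rw [Measure.finset_sum_apply]
    simp only [Measure.smul_apply, smul_eq_mul, Measure.dirac_apply' _ hs, hofReal]
    -- LHS: μ s = μ (s ∩ T)
    have h1 : μ s = μ (s ∩ T) := by
      have := measure_inter_add_diff (μ := μ) s hTm
      have h2 : μ (s \ T) = 0 :=
        le_antisymm (le_trans (measure_mono (Set.diff_subset_compl s T)) hTc.le) zero_le
      rw [← this, h2, add_zero]
    have hunion : s ∩ T = ⋃ i : Fin N, s ∩ {((e.symm i).1 : Ω)} := by
      ext z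
      simp only [Set.mem_inter_iff, Set.mem_iUnion, Set.mem_singleton_iff]
      constructor
      · rintro ⟨hzs, hzT⟩
        refine ⟨e ⟨z, hT.mem_toFinset.2 hzT⟩, hzs, ?_⟩
        simp
      · rintro ⟨i, hzs, rfl⟩
        exact ⟨hzs, hT.mem_toFinset.1 (e.symm i).2⟩
    have hdisj : Pairwise (Function.onFun Disjoint fun i : Fin N => s ∩ {((e.symm i).1 : Ω)}) := by
      intro i j hij
      have hne : ((e.symm i).1 : Ω) ≠ (e.symm j).1 := by
        intro h
        apply hij
        have : (e.symm i) = (e.symm j) := Subtype.ext h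
        simpa using congrArg e this
      exact Set.disjoint_left.2 (by rintro z ⟨_, rfl⟩ ⟨_, h⟩; exact hne h)
    rw [h1, hunion, measure_iUnion hdisj
      (fun i => hs.inter (measurableSet_singleton _)), tsum_fintype]
    refine Finset.sum_congr rfl fun i _ => ?_
    by_cases hmem : ((e.symm i).1 : Ω) ∈ s
    · rw [Set.inter_eq_right.2 (Set.singleton_subset_iff.2 hmem)]
      simp [Set.indicator_apply, hmem]
    · rw [Set.inter_singleton_eq_empty.2 hmem]
      simp [Set.indicator_apply, hmem]
end

section
/- Let (X,d) be a locally compact metric space, Ω ⊆ X an open precompact subset, and μ, ν Radon measures on Ω. Let 1 ≤ p < r < ∞ and suppose there exists C > 0 such that ‖φ‖_{L^r(Ω,μ)} ≤ C‖φ‖_{L^p(Ω,ν)} for every Lipschitz function φ : Ω → ℝ with compact support in Ω. Then there exist a countable set of points {x_i}_{i∈I} in Ω and positive real numbers {μ_i}_{i∈I} such that μ = Σ_{i∈I} μ_i δ_{x_i}. -/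
open MeasureTheory ENNReal NNReal Filter Topology Metric Set

-- bump function lemma
lemma bump_props {X : Type*} [MetricSpace X] (K : Set X) (hKne : K.Nonempty) {δ : ℝ} (hδ : 0 < δ) :
    ∃ φ : X → ℝ, LipschitzWith (Real.toNNReal δ⁻¹) φ ∧
      (∀ x, 0 ≤ φ x) ∧ (∀ x, φ x ≤ 1) ∧ (∀ x ∈ K, φ x = 1) ∧
      Function.support φ ⊆ Metric.thickening δ K := by
  refine ⟨fun x => max (1 - Metric.infDist x K / δ) 0, ?_, fun x => le_max_right _ _, ?_, ?_, ?_⟩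
  · have h1 : LipschitzWith (Real.toNNReal δ⁻¹) (fun t : ℝ => max (1 - t / δ) 0) := by
      apply LipschitzWith.of_dist_le_mul
      intro a b
      have : dist (max (1 - a / δ) 0) (max (1 - b / δ) 0) ≤ dist (1 - a/δ) (1 - b/δ) := by
        rw [Real.dist_eq, Real.dist_eq]
        exact abs_max_sub_max_le_abs _ _ _
      refine this.trans ?_
      rw [Real.dist_eq, Real.dist_eq]
      have : (1 - a/δ) - (1 - b/δ) = (b - a)/δ := by ring
      rw [this, abs_div, abs_of_pos hδ, Real.coe_toNNReal _ (by positivity)]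
      rw [abs_sub_comm, div_eq_inv_mul]
    have h2 := h1.comp (lipschitz_infDist_pt K)
    rw [mul_one] at h2
    exact h2
  · intro x
    have h0 : 0 ≤ Metric.infDist x K := Metric.infDist_nonneg
    have : 1 - Metric.infDist x K / δ ≤ 1 := by
      have : 0 ≤ Metric.infDist x K / δ := by positivity
      linarith
    exact max_le this zero_le_one
  · intro x hx
    simp only [Metric.infDist_zero_of_mem hx]
    norm_num
  · intro x hx
    have hx' : ¬ (1 - Metric.infDist x K / δ ≤ 0) := by
      intro h
      apply hx
      simp only [Function.mem_support, ne_eq, not_not] at *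
      exact max_eq_right h
    push_neg at hx'
    have : Metric.infDist x K < δ := by
      by_contra h
      push_neg at h
      have : (1:ℝ) ≤ Metric.infDist x K / δ := (one_le_div hδ).mpr h
      linarith
    exact (Metric.mem_thickening_iff_infDist_lt hKne).mpr this

/-- Lemma 3.1, Reverse Hölder: in a locally compact metric space
with Radon measures `μ, ν` and a precompact open `Ω`, if
`‖φ‖_{L^r(Ω,μ)} ≤ C ‖φ‖_{L^p(Ω,ν)}` for all Lipschitz `φ` compactly supported
in `Ω` and `1 ≤ p < r`, then `μ` on `Ω` is a countable sum of point masses. -/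
theorem reverse_holder_atomic
    {X : Type*} [MetricSpace X] [LocallyCompactSpace X]
    [MeasurableSpace X] [BorelSpace X]
    (μ ν : Measure X) [μ.Regular] [ν.Regular]
    (Ω : Set X) (hΩopen : IsOpen Ω) (hΩcpt : IsCompact (closure Ω))
    (p r : ℝ) (hp : 1 ≤ p) (hpr : p < r)
    (C : ℝ) (hC : 0 < C)
    (hrh : ∀ φ : X → ℝ, (∃ K : ℝ≥0, LipschitzWith K φ) →
      IsCompact (closure (Function.support φ)) →
      closure (Function.support φ) ⊆ Ω →
      eLpNorm φ (ENNReal.ofReal r) (μ.restrict Ω) ≤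
        ENNReal.ofReal C * eLpNorm φ (ENNReal.ofReal p) (ν.restrict Ω)) :
    ∃ (ι : Type) (_ : Countable ι) (x : ι → X) (c : ι → ℝ),
      (∀ i, x i ∈ Ω) ∧ (∀ i, 0 < c i) ∧
      μ.restrict Ω = Measure.sum (fun i => ENNReal.ofReal (c i) • Measure.dirac (x i)) := by
  -- Step 1: the reverse Hölder inequality for compact subsets of Ω
  have hkeyK : ∀ K : Set X, IsCompact K → K ⊆ Ω →
      μ K ≤ ENNReal.ofReal C ^ r * ν K ^ (r / p) := by
    intro K hK hKΩ
    have hp0 : (0:ℝ) < p := lt_of_lt_of_le one_pos hp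
    have hr0 : (0:ℝ) < r := hp0.trans hpr
    rcases K.eq_empty_or_nonempty with rfl | hKne
    · simp
    obtain ⟨δ₁, hδ₁pos, hδ₁⟩ := hK.exists_thickening_subset_open hΩopen hKΩ
    -- the bound for each small δ
    have bound : ∀ δ ∈ Set.Ioo (0:ℝ) δ₁, μ K ≤ ENNReal.ofReal C ^ r * ν (cthickening δ K) ^ (r / p) := by
      intro δ hδ
      obtain ⟨hδ0, hδlt⟩ := hδ
      obtain ⟨φ, hφlip, hφ0, hφ1, hφK, hφsupp⟩ := bump_props K hKne hδ0
      have hTsub : cthickening δ K ⊆ Ω :=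
        (cthickening_subset_thickening' hδ₁pos hδlt K).trans hδ₁
      have hclsupp : closure (Function.support φ) ⊆ cthickening δ K :=
        (closure_mono hφsupp).trans (closure_thickening_subset_cthickening δ K)
      have hclΩ : closure (Function.support φ) ⊆ Ω := hclsupp.trans hTsub
      have hcpt : IsCompact (closure (Function.support φ)) :=
        hΩcpt.of_isClosed_subset isClosed_closure (hclΩ.trans subset_closure)
      have hineq := hrh φ ⟨_, hφlip⟩ hcpt hclΩ
      -- r-related ENNReal facts
      have hrne : ENNReal.ofReal r ≠ 0 := by simp [hr0.le, hr0]
      have hrtop : ENNReal.ofReal r ≠ ∞ := ofReal_ne_top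
      have hpne : ENNReal.ofReal p ≠ 0 := by simp [hp0.le, hp0]
      have hptop : ENNReal.ofReal p ≠ ∞ := ofReal_ne_top
      have hrr : (ENNReal.ofReal r).toReal = r := toReal_ofReal hr0.le
      have hpp : (ENNReal.ofReal p).toReal = p := toReal_ofReal hp0.le
      -- lower bound
      have hlow : (μ K) ^ (1 / r) ≤ eLpNorm φ (ENNReal.ofReal r) (μ.restrict Ω) := by
        have h1 : eLpNorm (K.indicator fun _ => (1:ℝ)) (ENNReal.ofReal r) (μ.restrict Ω)
            ≤ eLpNorm φ (ENNReal.ofReal r) (μ.restrict Ω) := by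
          apply eLpNorm_mono
          intro x
          by_cases hx : x ∈ K
          · simp [Set.indicator_of_mem hx, hφK x hx, Real.norm_eq_abs,
              abs_of_nonneg (hφ0 x)]
          · simp only [Set.indicator_of_notMem hx, norm_zero]
            exact norm_nonneg _
        have h2 : eLpNorm (K.indicator fun _ => (1:ℝ)) (ENNReal.ofReal r) (μ.restrict Ω)
            = ((μ.restrict Ω) K) ^ (1 / r) := by
          rw [eLpNorm_indicator_const hK.isClosed.measurableSet hrne hrtop]
          simp [hrr]
        have h3 : (μ.restrict Ω) K = μ K := by
          rw [Measure.restrict_apply hK.isClosed.measurableSet]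
          rw [Set.inter_eq_self_of_subset_left hKΩ]
        rw [← h3, ← h2]
        exact h1
      -- upper bound
      have hup : eLpNorm φ (ENNReal.ofReal p) (ν.restrict Ω) ≤ (ν (cthickening δ K)) ^ (1 / p) := by
        have h1 : eLpNorm φ (ENNReal.ofReal p) (ν.restrict Ω)
            ≤ eLpNorm ((cthickening δ K).indicator fun _ => (1:ℝ)) (ENNReal.ofReal p)
                (ν.restrict Ω) := by
          apply eLpNorm_mono
          intro x
          by_cases hx : x ∈ cthickening δ K
          · simp [Set.indicator_of_mem hx, Real.norm_eq_abs, abs_of_nonneg (hφ0 x),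
              abs_of_nonneg (zero_le_one (α := ℝ)), hφ1 x]
          · have : φ x = 0 := by
              by_contra h
              exact hx (thickening_subset_cthickening δ K (hφsupp h))
            simp [Set.indicator_of_notMem hx, this]
        have h2 : eLpNorm ((cthickening δ K).indicator fun _ => (1:ℝ)) (ENNReal.ofReal p)
            (ν.restrict Ω) = ((ν.restrict Ω) (cthickening δ K)) ^ (1 / p) := by
          rw [eLpNorm_indicator_const (isClosed_cthickening).measurableSet hpne hptop]
          simp [hpp]
        have h3 : (ν.restrict Ω) (cthickening δ K) ≤ ν (cthickening δ K) :=
          Measure.restrict_le_self _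
        calc eLpNorm φ (ENNReal.ofReal p) (ν.restrict Ω) ≤ _ := h1
          _ = _ := h2
          _ ≤ (ν (cthickening δ K)) ^ (1 / p) :=
            ENNReal.rpow_le_rpow h3 (by positivity)
      have hmain : (μ K) ^ (1/r) ≤ ENNReal.ofReal C * (ν (cthickening δ K)) ^ (1/p) :=
        hlow.trans (hineq.trans (mul_le_mul_right hup _))
      -- raise to power r
      have := ENNReal.rpow_le_rpow hmain hr0.le
      rw [← ENNReal.rpow_mul, one_div_mul_cancel hr0.ne', ENNReal.rpow_one,
        ENNReal.mul_rpow_of_nonneg _ _ hr0.le, ← ENNReal.rpow_mul] at this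
      have harith : 1 / p * r = r / p := by field_simp
      rwa [harith] at this
    -- limit δ → 0
    have hfin : ∃ δ > (0:ℝ), ν (cthickening δ K) ≠ ∞ := by
      refine ⟨δ₁ / 2, by linarith, ?_⟩
      have hsub : cthickening (δ₁/2) K ⊆ Ω :=
        (cthickening_subset_thickening' hδ₁pos (by linarith) K).trans hδ₁
      exact ((measure_mono (hsub.trans subset_closure)).trans_lt hΩcpt.measure_lt_top).ne
    have htend : Tendsto (fun δ => ν (cthickening δ K)) (𝓝[>] 0) (𝓝 (ν K)) :=
      (tendsto_measure_cthickening_of_isClosed hfin hK.isClosed).mono_left nhdsWithin_le_nhds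
    have hCne : ENNReal.ofReal C ^ r ≠ ∞ :=
      ENNReal.rpow_ne_top_of_nonneg hr0.le ofReal_ne_top
    have htend2 : Tendsto (fun δ => ENNReal.ofReal C ^ r * ν (cthickening δ K) ^ (r / p))
        (𝓝[>] 0) (𝓝 (ENNReal.ofReal C ^ r * ν K ^ (r / p))) := by
      apply ENNReal.Tendsto.const_mul
      · exact (ENNReal.continuous_rpow_const.tendsto _).comp htend
      · exact Or.inr hCne
    refine ge_of_tendsto htend2 ?_
    filter_upwards [Ioo_mem_nhdsGT_of_mem ⟨le_refl (0:ℝ), hδ₁pos⟩] with δ hδ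
    exact bound δ hδ
  -- Step 2: extend to measurable subsets of Ω by inner regularity
  have key : ∀ s : Set X, MeasurableSet s → s ⊆ Ω →
      μ s ≤ ENNReal.ofReal C ^ r * ν s ^ (r / p) := by
    have hp0 : (0:ℝ) < p := lt_of_lt_of_le one_pos hp
    intro s hs hsΩ
    have hfin : μ s ≠ ∞ :=
      ((measure_mono (hsΩ.trans subset_closure)).trans_lt hΩcpt.measure_lt_top).ne
    refine ENNReal.le_of_forall_pos_le_add fun ε hε _ => ?_
    obtain ⟨K, hKs, hKcpt, hlt⟩ := hs.exists_isCompact_lt_add hfin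
      (by exact_mod_cast hε.ne' : (ε:ℝ≥0∞) ≠ 0)
    calc μ s ≤ μ K + ε := hlt.le
      _ ≤ ENNReal.ofReal C ^ r * ν K ^ (r / p) + ε := by
          gcongr
          exact hkeyK K hKcpt (hKs.trans hsΩ)
      _ ≤ ENNReal.ofReal C ^ r * ν s ^ (r / p) + ε :=
          add_le_add_left (mul_le_mul_right
            (ENNReal.rpow_le_rpow (measure_mono hKs) (div_nonneg (by linarith) hp0.le)) _) _
  -- Step 3: the set of ν-atoms in Ω is countable
  set A : Set X := {x | x ∈ Ω ∧ ν {x} ≠ 0} with hA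
  have hAc : A.Countable := by
    have hcnt : Set.Countable {x : X | 0 < (ν.restrict Ω) {x}} := by
      apply Measure.countable_meas_pos_of_disjoint_of_meas_iUnion_ne_top
        (ν.restrict Ω) (As := fun x : X => {x})
        (fun x => measurableSet_singleton x)
        (fun x y hxy => by simpa [Function.onFun] using hxy)
      refine ne_of_lt (lt_of_le_of_lt (measure_mono (Set.subset_univ _)) ?_)
      rw [Measure.restrict_apply_univ]
      exact (measure_mono (subset_closure)).trans_lt hΩcpt.measure_lt_top
    apply hcnt.mono
    intro x hx
    rw [hA] at hx
    simp only [Set.mem_setOf_eq]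
    rw [Measure.restrict_apply (measurableSet_singleton x),
      Set.inter_eq_self_of_subset_left (Set.singleton_subset_iff.mpr hx.1)]
    exact pos_iff_ne_zero.mpr hx.2
  -- Step 4: μ vanishes on Ω minus the atoms
  have hE0 : μ (Ω \ A) = 0 := by
    have hp0 : (0:ℝ) < p := lt_of_lt_of_le one_pos hp
    have hr0 : (0:ℝ) < r := hp0.trans hpr
    have hq1 : 1 < r / p := (one_lt_div hp0).mpr hpr
    set q : ℝ := r / p with hq
    set E : Set X := Ω \ A with hEdef
    have hEm : MeasurableSet E := hΩopen.measurableSet.diff hAc.measurableSet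
    have hEΩ : E ⊆ Ω := diff_subset
    set ρ : Measure X := ν.restrict E with hρdef
    have hνfin : ν (closure Ω) ≠ ∞ := hΩcpt.measure_lt_top.ne
    have hρfin : IsFiniteMeasure ρ := by
      constructor
      rw [hρdef, Measure.restrict_apply_univ]
      exact ((measure_mono (hEΩ.trans subset_closure)).trans_lt hΩcpt.measure_lt_top)
    have hρatom : ∀ x : X, ρ {x} = 0 := by
      intro x
      rw [hρdef, Measure.restrict_apply (measurableSet_singleton x)]
      by_cases hx : x ∈ E
      · rw [Set.inter_eq_self_of_subset_left (Set.singleton_subset_iff.mpr hx)]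
        by_contra h
        exact hx.2 (by rw [hA]; exact ⟨hx.1, h⟩)
      · rw [Set.singleton_inter_eq_empty.mpr hx, measure_empty]
    set c0 : ℝ≥0∞ := ENNReal.ofReal C ^ r * ν (closure Ω) with hc0
    have hc0top : c0 ≠ ∞ :=
      ENNReal.mul_ne_top (ENNReal.rpow_ne_top_of_nonneg hr0.le ofReal_ne_top) hνfin
    -- main ε-bound
    have main : ∀ ε : ℝ≥0∞, 0 < ε → ε ≠ ∞ → μ E ≤ c0 * ε ^ (q - 1) := by
      intro ε hε hεtop
      -- choose radii
      have hrad : ∀ y : X, ∃ δ : ℝ, 0 < δ ∧ ρ (Metric.closedBall y δ) < ε := by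
        intro y
        have htend : Tendsto (fun δ => ρ (cthickening δ {y})) (𝓝[>] 0) (𝓝 (ρ {y})) :=
          (tendsto_measure_cthickening_of_isClosed
            ⟨1, one_pos, measure_ne_top ρ _⟩ isClosed_singleton).mono_left nhdsWithin_le_nhds
        rw [hρatom y] at htend
        have hev : ∀ᶠ δ in 𝓝[>] (0:ℝ), ρ (cthickening δ {y}) < ε :=
          htend.eventually_lt_const hε
        obtain ⟨δ, hδlt, hδpos⟩ := (hev.and self_mem_nhdsWithin).exists
        refine ⟨δ, hδpos, ?_⟩
        rwa [cthickening_singleton y (le_of_lt hδpos)] at hδlt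
      choose δ hδpos hδε using hrad
      -- finite subcover of closure Ω
      obtain ⟨t, -, htcov⟩ := hΩcpt.elim_nhds_subcover (fun y => Metric.ball y (δ y))
        (fun y _ => Metric.ball_mem_nhds y (hδpos y))
      set l := t.toList with hl
      set B : ℕ → Set X := fun n =>
        if h : n < l.length then E ∩ Metric.ball (l.get ⟨n, h⟩) (δ (l.get ⟨n, h⟩)) else ∅ with hB
      have hBm : ∀ n, MeasurableSet (B n) := by
        intro n
        rw [hB]
        beta_reduce
        split
        · exact hEm.inter Metric.isOpen_ball.measurableSet
        · exact MeasurableSet.empty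
      have hBE : ∀ n, B n ⊆ E := by
        intro n
        rw [hB]
        beta_reduce
        split
        · exact Set.inter_subset_left
        · exact Set.empty_subset _
      have hBcover : E = ⋃ n, B n := by
        apply Set.Subset.antisymm
        · intro x hx
          have hxΩ : x ∈ closure Ω := subset_closure (hEΩ hx)
          obtain ⟨y, hyt, hxy⟩ := Set.mem_iUnion₂.mp (htcov hxΩ)
          obtain ⟨n, hn⟩ := List.mem_iff_get.mp (Finset.mem_toList.mpr hyt)
          subst hn
          refine Set.mem_iUnion.mpr ⟨n.1, ?_⟩
          rw [hB]
          beta_reduce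
          rw [dif_pos n.2]
          exact ⟨hx, hxy⟩
        · exact Set.iUnion_subset hBE
      have hBsmall : ∀ n, ρ (B n) ≤ ε := by
        intro n
        rw [hB]
        beta_reduce
        split
        · rename_i h
          refine le_trans (measure_mono ?_) (hδε (l.get ⟨n, h⟩)).le
          exact Set.inter_subset_right.trans (Metric.ball_subset_closedBall)
        · simp
      -- disjointify
      set D : ℕ → Set X := disjointed B with hD
      have hDm : ∀ n, MeasurableSet (D n) := MeasurableSet.disjointed hBm
      have hDB : ∀ n, D n ⊆ B n := fun n => disjointed_subset B n
      have hDunion : (⋃ n, D n) = E := by rw [hD, iUnion_disjointed, ← hBcover]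
      have hpow : ∀ x : ℝ≥0∞, x ≤ ε → x ^ q ≤ ε ^ (q - 1) * x := by
        intro x hxε
        rcases eq_or_ne x 0 with rfl | hx0
        · rw [ENNReal.zero_rpow_of_pos (by linarith)]
          simp
        · have hxtop : x ≠ ∞ := (hxε.trans_lt (lt_top_iff_ne_top.mpr hεtop)).ne
          have h1 : x ^ q = x ^ (q - 1) * x ^ (1:ℝ) := by
            rw [← ENNReal.rpow_add _ _ hx0 hxtop]
            norm_num
          rw [h1, ENNReal.rpow_one]
          exact mul_le_mul_left (ENNReal.rpow_le_rpow hxε (by linarith)) x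
      -- the chain
      have hμE : μ E ≤ ∑' n, μ (D n) := by
        rw [← hDunion]
        exact measure_iUnion_le D
      have hterm : ∀ n, μ (D n) ≤ ENNReal.ofReal C ^ r * (ε ^ (q-1) * ρ (D n)) := by
        intro n
        have h1 : μ (D n) ≤ ENNReal.ofReal C ^ r * ν (D n) ^ q :=
          key (D n) (hDm n) (((hDB n).trans (hBE n)).trans hEΩ)
        have h2 : ν (D n) = ρ (D n) := by
          rw [hρdef, Measure.restrict_apply (hDm n),
            Set.inter_eq_self_of_subset_left ((hDB n).trans (hBE n))]
        have h3 : ρ (D n) ≤ ε := le_trans (measure_mono (hDB n)) (hBsmall n)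
        rw [h2] at h1
        exact h1.trans (mul_le_mul_right (hpow _ h3) _)
      have hsum : ∑' n, ρ (D n) = ρ E := by
        rw [← measure_iUnion (disjoint_disjointed B) hDm, hDunion]
      calc μ E ≤ ∑' n, μ (D n) := hμE
        _ ≤ ∑' n, ENNReal.ofReal C ^ r * (ε ^ (q-1) * ρ (D n)) :=
            ENNReal.tsum_le_tsum hterm
        _ = ENNReal.ofReal C ^ r * (ε ^ (q-1) * ∑' n, ρ (D n)) := by
            rw [ENNReal.tsum_mul_left, ENNReal.tsum_mul_left]
        _ = ENNReal.ofReal C ^ r * ε ^ (q-1) * ρ E := by rw [hsum]; ring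
        _ ≤ c0 * ε ^ (q-1) := by
            rw [hc0]
            have : ρ E ≤ ν (closure Ω) := by
              rw [hρdef]
              exact (Measure.restrict_le_self _).trans (measure_mono (hEΩ.trans subset_closure))
            calc ENNReal.ofReal C ^ r * ε ^ (q-1) * ρ E
                ≤ ENNReal.ofReal C ^ r * ε ^ (q-1) * ν (closure Ω) :=
                  mul_le_mul_right this _
              _ = ENNReal.ofReal C ^ r * ν (closure Ω) * ε ^ (q-1) := by ring
    -- take ε → 0
    have htend : Tendsto (fun ε : ℝ≥0∞ => c0 * ε ^ (q - 1)) (𝓝[>] 0) (𝓝 0) := by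
      have h1 : Tendsto (fun ε : ℝ≥0∞ => ε ^ (q - 1)) (𝓝 0) (𝓝 ((0:ℝ≥0∞) ^ (q-1))) :=
        ENNReal.continuous_rpow_const.tendsto 0
      rw [ENNReal.zero_rpow_of_pos (by linarith)] at h1
      have h1' : Tendsto (fun ε : ℝ≥0∞ => ε ^ (q - 1)) (𝓝[>] (0:ℝ≥0∞)) (𝓝 0) :=
        h1.mono_left nhdsWithin_le_nhds
      have h2 := ENNReal.Tendsto.const_mul h1' (Or.inr hc0top)
      simpa using h2
    have hev : ∀ᶠ ε in 𝓝[>] (0:ℝ≥0∞), μ E ≤ c0 * ε ^ (q - 1) := by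
      filter_upwards [self_mem_nhdsWithin,
        eventually_nhdsWithin_of_eventually_nhds (eventually_lt_nhds (zero_lt_one))] with ε h1 h2
      exact main ε h1 (h2.trans ENNReal.one_lt_top).ne
    have := ge_of_tendsto htend hev
    simpa using this
  -- Step 5: conclusion
  classical
  set S : Set X := {x ∈ A | μ {x} ≠ 0} with hSdef
  have hSc : S.Countable := hAc.mono (sep_subset _ _)
  have hSΩ : S ⊆ Ω := fun x hx => by
    have := hx.1
    rw [hA] at this
    exact this.1
  have hAS0 : μ (A \ S) = 0 := by
    rw [← Set.biUnion_of_singleton (A \ S)]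
    refine (measure_biUnion_null_iff (hAc.mono diff_subset)).mpr ?_
    intro x hx
    by_contra h
    exact hx.2 ⟨hx.1, h⟩
  have hΩS0 : μ (Ω \ S) = 0 := by
    have hsub : Ω \ S ⊆ (Ω \ A) ∪ (A \ S) := by
      intro x hx
      by_cases hxA : x ∈ A
      · exact Or.inr ⟨hxA, hx.2⟩
      · exact Or.inl ⟨hx.1, hxA⟩
    exact measure_mono_null hsub (measure_union_null hE0 hAS0)
  have hSsingle_fin : ∀ x ∈ S, μ {x} ≠ ∞ := fun x hx =>
    ((measure_mono ((Set.singleton_subset_iff.mpr (hSΩ hx)).trans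
      subset_closure)).trans_lt hΩcpt.measure_lt_top).ne
  -- build the index type
  have hScnt : Countable ↥S := hSc.to_subtype
  obtain ⟨f, hf⟩ := (countable_iff_exists_injective ↥S).mp hScnt
  let e : ↥S ≃ Set.range f := Equiv.ofInjective f hf
  refine ⟨↥(Set.range f), inferInstance, fun i => ((e.symm i : ↥S) : X),
    fun i => (μ {((e.symm i : ↥S) : X)}).toReal, fun i => hSΩ (e.symm i).2, ?_, ?_⟩
  · intro i
    have h1 : μ {((e.symm i : ↥S) : X)} ≠ 0 := (e.symm i).2.2
    have h2 := hSsingle_fin _ (e.symm i).2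
    exact ENNReal.toReal_pos h1 h2
  · ext s hs
    rw [Measure.restrict_apply hs, Measure.sum_apply _ hs]
    have hterm : ∀ i : ↥(Set.range f),
        (ENNReal.ofReal (μ {((e.symm i : ↥S) : X)}).toReal • Measure.dirac (((e.symm i : ↥S) : X))) s
          = μ {((e.symm i : ↥S) : X)} * (s.indicator (fun _ => (1:ℝ≥0∞)) ((e.symm i : ↥S) : X)) := by
      intro i
      rw [Measure.smul_apply, smul_eq_mul, Measure.dirac_apply' _ hs,
        ENNReal.ofReal_toReal (hSsingle_fin _ (e.symm i).2)]
      rfl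
    rw [tsum_congr hterm]
    -- reindex by the equivalence
    have hre : ∑' i : ↥(Set.range f),
        μ {((e.symm i : ↥S) : X)} * (s.indicator (fun _ => (1:ℝ≥0∞)) ((e.symm i : ↥S) : X))
        = ∑' j : ↥S, μ {(j : X)} * (s.indicator (fun _ => (1:ℝ≥0∞)) (j : X)) := by
      exact e.symm.tsum_eq (fun j => μ {(j : X)} * (s.indicator (fun _ => (1:ℝ≥0∞)) (j : X)))
    rw [hre]
    -- now compute μ (s ∩ Ω)
    have hLHS : μ (s ∩ Ω) = μ (s ∩ S) := by
      apply le_antisymm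
      · calc μ (s ∩ Ω) ≤ μ ((s ∩ S) ∪ (Ω \ S)) := by
              apply measure_mono
              intro x hx
              by_cases hxS : x ∈ S
              · exact Or.inl ⟨hx.1, hxS⟩
              · exact Or.inr ⟨hx.2, hxS⟩
          _ ≤ μ (s ∩ S) + μ (Ω \ S) := measure_union_le _ _
          _ = μ (s ∩ S) := by rw [hΩS0, add_zero]
      · exact measure_mono (Set.inter_subset_inter_right s hSΩ)
    rw [hLHS]
    -- μ (s ∩ S) as a tsum
    have h1 : (∑' b : ↥(s ∩ S), μ {(b : X)}) = μ (s ∩ S) := by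
      have := tsum_measure_preimage_singleton (μ := μ) (s := s ∩ S)
        (hSc.mono Set.inter_subset_right)
        (f := id) (fun y _ => measurableSet_singleton y)
      simpa using this
    rw [← h1]
    -- relate the two tsums
    have h2 : ∀ j : ↥S, μ {(j : X)} * (s.indicator (fun _ => (1:ℝ≥0∞)) (j : X))
        = ((s ∩ S).indicator (fun y => μ {y})) (j : X) := by
      intro j
      by_cases hj : (j : X) ∈ s
      · rw [Set.indicator_of_mem hj, Set.indicator_of_mem (Set.mem_inter hj j.2), mul_one]
      · rw [Set.indicator_of_notMem hj, Set.indicator_of_notMem (fun h => hj h.1), mul_zero]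
    rw [tsum_congr h2]
    rw [tsum_subtype S ((s ∩ S).indicator (fun y => μ {y}))]
    rw [Set.indicator_indicator, Set.inter_comm S (s ∩ S),
      Set.inter_eq_self_of_subset_left Set.inter_subset_right]
    rw [← tsum_subtype (s ∩ S) (fun y => μ {y})]
end

section
/- Let (X,d) be a locally compact metric space, Ω ⊆ X an open precompact subset, and μ a Radon measure on Ω. Let 1 ≤ p < r < ∞ and suppose there exists C > 0 such that ‖φ‖_{L^r(Ω,μ)} ≤ C‖φ‖_{L^p(Ω,μ)} for every Lipschitz function φ : Ω → ℝ with compact support in Ω. Then there exist a finite set of points x_1, …, x_N ∈ Ω and real numbers μ_1, …, μ_N with each μ_i ≥ C^{−pr/(r−p)} such that μ = Σ_{i=1}^N μ_i δ_{x_i}. In particular, every Borel set A ⊆ Ω satisfies μ(A) = 0 or μ(A) ≥ C^{−pr/(r−p)}. -/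
open MeasureTheory ENNReal NNReal Filter Topology

private lemma rh_key {X : Type*} [MetricSpace X] [MeasurableSpace X] [BorelSpace X]
    (μ : Measure X) (Ω : Set X) (hΩcpt : IsCompact (closure Ω))
    (p r : ℝ) (hp : 0 < p) (hr : 0 < r) (C : ℝ)
    (hrh : ∀ φ : X → ℝ, (∃ K : ℝ≥0, LipschitzWith K φ) →
      IsCompact (closure (Function.support φ)) →
      closure (Function.support φ) ⊆ Ω →
      eLpNorm φ (ENNReal.ofReal r) (μ.restrict Ω) ≤
        ENNReal.ofReal C * eLpNorm φ (ENNReal.ofReal p) (μ.restrict Ω))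
    (K U : Set X) (hK : IsCompact K) (hU : IsOpen U) (hKU : K ⊆ U) (hUΩ : U ⊆ Ω) :
    μ K ^ (1/r) ≤ ENNReal.ofReal C * μ U ^ (1/p) := by
  rcases K.eq_empty_or_nonempty with hKe | hKne
  · rw [hKe, measure_empty, ENNReal.zero_rpow_of_pos (by positivity : (0:ℝ) < 1/r)]
    exact zero_le
  obtain ⟨δ, hδpos, hδsub⟩ := hK.exists_cthickening_subset_open hU hKU
  set φ : X → ℝ := fun x => max (1 - Metric.infDist x K / δ) 0 with hφdef
  have hlip : LipschitzWith (Real.toNNReal δ⁻¹) φ := by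
    have h2 : LipschitzWith (Real.toNNReal δ⁻¹) (fun t : ℝ => max (1 - t / δ) 0) := by
      apply LipschitzWith.of_dist_le_mul
      intro a b
      rw [Real.dist_eq, Real.dist_eq]
      refine (abs_max_sub_max_le_abs _ _ _).trans ?_
      rw [Real.coe_toNNReal _ (by positivity),
        show (1 - a / δ) - (1 - b / δ) = (b - a)/δ by ring, abs_div, abs_of_pos hδpos,
        abs_sub_comm, div_eq_inv_mul]
    have h3 := h2.comp (Metric.lipschitz_infDist_pt K); simp only [mul_one] at h3; exact h3
  have hφ0 : ∀ x, 0 ≤ φ x := fun x => le_max_right _ _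
  have hφ1 : ∀ x, φ x ≤ 1 := by
    intro x
    apply max_le _ zero_le_one
    have := Metric.infDist_nonneg (x := x) (s := K)
    have : 0 ≤ Metric.infDist x K / δ := by positivity
    linarith
  have hφK : ∀ x ∈ K, φ x = 1 := by
    intro x hx
    simp [hφdef, Metric.infDist_zero_of_mem hx]
  have hsupp : Function.support φ ⊆ Metric.thickening δ K := by
    intro x hx
    rw [Metric.mem_thickening_iff_infDist_lt hKne]
    by_contra h
    push_neg at h
    have : 1 - Metric.infDist x K / δ ≤ 0 := by
      have : (1:ℝ) ≤ Metric.infDist x K / δ := (one_le_div hδpos).2 h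
      linarith
    exact hx (max_eq_right this)
  have hsuppcl : closure (Function.support φ) ⊆ U := by
    refine subset_trans ?_ hδsub
    exact (closure_mono hsupp).trans (Metric.closure_thickening_subset_cthickening δ K)
  have hsuppΩ : closure (Function.support φ) ⊆ Ω := hsuppcl.trans hUΩ
  have hsuppcpt : IsCompact (closure (Function.support φ)) :=
    hΩcpt.of_isClosed_subset isClosed_closure (hsuppΩ.trans subset_closure)
  have hmain := hrh φ ⟨_, hlip⟩ hsuppcpt hsuppΩ
  have hrne : (ENNReal.ofReal r) ≠ 0 := by simp [ENNReal.ofReal_eq_zero]; linarith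
  have hpne : (ENNReal.ofReal p) ≠ 0 := by simp [ENNReal.ofReal_eq_zero]; linarith
  have hle1 : μ K ^ (1/r) ≤ eLpNorm φ (ENNReal.ofReal r) (μ.restrict Ω) := by
    have hind : eLpNorm (K.indicator (fun _ => (1:ℝ))) (ENNReal.ofReal r) (μ.restrict Ω)
        = μ K ^ (1/r) := by
      rw [eLpNorm_indicator_const hK.measurableSet hrne ENNReal.ofReal_ne_top]
      rw [Measure.restrict_apply hK.measurableSet,
        Set.inter_eq_left.2 (hKU.trans hUΩ), ENNReal.toReal_ofReal hr.le]
      simp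
    rw [← hind]
    apply eLpNorm_mono
    intro x
    by_cases hx : x ∈ K
    · simp [hx, Real.norm_eq_abs, abs_of_nonneg (hφ0 x), hφK x hx]
    · simp [hx, Real.norm_eq_abs, abs_of_nonneg (hφ0 x), hφ0 x]
  have hle2 : eLpNorm φ (ENNReal.ofReal p) (μ.restrict Ω) ≤ μ U ^ (1/p) := by
    have hind : eLpNorm (U.indicator (fun _ => (1:ℝ))) (ENNReal.ofReal p) (μ.restrict Ω)
        = ((μ.restrict Ω) U) ^ (1/p) := by
      rw [eLpNorm_indicator_const hU.measurableSet hpne ENNReal.ofReal_ne_top,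
        ENNReal.toReal_ofReal hp.le]
      simp
    have hmono : eLpNorm φ (ENNReal.ofReal p) (μ.restrict Ω)
        ≤ eLpNorm (U.indicator (fun _ => (1:ℝ))) (ENNReal.ofReal p) (μ.restrict Ω) := by
      apply eLpNorm_mono
      intro x
      by_cases hx : x ∈ U
      · simp only [Set.indicator_of_mem hx, Real.norm_eq_abs, abs_of_nonneg (hφ0 x), abs_one]
        exact hφ1 x
      · have : φ x = 0 := by
          by_contra h
          exact hx (hsuppcl (subset_closure h))
        simp [this, hx]
    refine hmono.trans ?_
    rw [hind]
    exact ENNReal.rpow_le_rpow (Measure.restrict_apply_le _ _) (by positivity)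
  calc μ K ^ (1/r) ≤ eLpNorm φ (ENNReal.ofReal r) (μ.restrict Ω) := hle1
    _ ≤ ENNReal.ofReal C * eLpNorm φ (ENNReal.ofReal p) (μ.restrict Ω) := hmain
    _ ≤ ENNReal.ofReal C * μ U ^ (1/p) := mul_le_mul_right hle2 _

private lemma rh_real (p r C a : ℝ) (hp : 1 ≤ p) (hpr : p < r) (hC : 0 < C)
    (ha : 0 < a) (hac : a < C ^ (-(p*r)/(r-p))) : a < (a ^ (1/r) / C) ^ p := by
  have hp0 : 0 < p := lt_of_lt_of_le one_pos hp
  have hr0 : 0 < r := hp0.trans hpr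
  have hrp : 0 < r - p := by linarith
  have key : a ^ ((r-p)/r) < C ^ (-p) := by
    have h1 : a ^ ((r-p)/r) < (C ^ (-(p*r)/(r-p))) ^ ((r-p)/r) :=
      Real.rpow_lt_rpow ha.le hac (by positivity)
    have h2 : (C ^ (-(p*r)/(r-p))) ^ ((r-p)/r) = C ^ (-p) := by
      rw [← Real.rpow_mul hC.le]
      congr 1
      field_simp
    linarith [h1, h2.le, h2.ge]
  have hsplit : a = a ^ (p/r) * a ^ ((r-p)/r) := by
    rw [← Real.rpow_add ha]
    rw [show p/r + (r-p)/r = 1 by field_simp; ring]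
    simp
  have hRHS : (a ^ (1/r) / C) ^ p = a ^ (p/r) * C ^ (-p) := by
    rw [Real.div_rpow (by positivity) hC.le, ← Real.rpow_mul ha.le,
      Real.rpow_neg hC.le, div_eq_mul_inv,
      show 1/r * p = p/r by ring]
  rw [hRHS]
  calc a = a ^ (p/r) * a ^ ((r-p)/r) := hsplit
    _ < a ^ (p/r) * C ^ (-p) := by
        apply mul_lt_mul_of_pos_left key (by positivity)

private lemma rh_dichotomy_compact {X : Type*} [MetricSpace X] [MeasurableSpace X] [BorelSpace X]
    (μ : Measure X) [μ.Regular] (Ω : Set X) (hΩopen : IsOpen Ω)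
    (hΩcpt : IsCompact (closure Ω))
    (p r : ℝ) (hp : 1 ≤ p) (hpr : p < r) (C : ℝ) (hC : 0 < C)
    (hrh : ∀ φ : X → ℝ, (∃ K : ℝ≥0, LipschitzWith K φ) →
      IsCompact (closure (Function.support φ)) →
      closure (Function.support φ) ⊆ Ω →
      eLpNorm φ (ENNReal.ofReal r) (μ.restrict Ω) ≤
        ENNReal.ofReal C * eLpNorm φ (ENNReal.ofReal p) (μ.restrict Ω))
    (K : Set X) (hKΩ : K ⊆ Ω) (hK : IsCompact K) :
    μ K = 0 ∨ ENNReal.ofReal (C ^ (-(p*r)/(r-p))) ≤ μ K := by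
  have hp0 : (0:ℝ) < p := lt_of_lt_of_le one_pos hp
  have hr0 : (0:ℝ) < r := hp0.trans hpr
  by_contra h
  push_neg at h
  obtain ⟨h1, h2⟩ := h
  have hfin : μ K ≠ ⊤ :=
    ((measure_mono (hKΩ.trans subset_closure)).trans_lt hΩcpt.measure_lt_top).ne
  set a := (μ K).toReal with ha_def
  have ha : 0 < a := ENNReal.toReal_pos h1 hfin
  have hac : a < C ^ (-(p*r)/(r-p)) := by
    exact (ENNReal.lt_ofReal_iff_toReal_lt hfin).1 h2
  have hreal : a < (a ^ (1/r) / C) ^ p := rh_real p r C a hp hpr hC ha hac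
  have hb : (0:ℝ) < a ^ (1/r) / C := by positivity
  set t : ℝ≥0∞ := ENNReal.ofReal ((a ^ (1/r) / C) ^ p) with ht_def
  have hKt : μ K < t := by
    rw [← ENNReal.ofReal_toReal hfin, ht_def]
    exact (ENNReal.ofReal_lt_ofReal_iff (by positivity)).2 hreal
  obtain ⟨U, hKU, hUopen, hUlt⟩ := Set.exists_isOpen_lt_of_lt K t hKt
  have hkey := rh_key μ Ω hΩcpt p r hp0 hr0 C hrh K (U ∩ Ω) hK (hUopen.inter hΩopen)
    (Set.subset_inter hKU hKΩ) Set.inter_subset_right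
  have hU'lt : μ (U ∩ Ω) < t := (measure_mono Set.inter_subset_left).trans_lt hUlt
  have hμK : μ K ^ (1/r) = ENNReal.ofReal (a ^ (1/r)) := by
    rw [← ENNReal.ofReal_toReal hfin, ← ha_def,
      ENNReal.ofReal_rpow_of_nonneg ha.le (by positivity)]
  have ht : t ^ (1/p) = ENNReal.ofReal (a ^ (1/r) / C) := by
    rw [ht_def, ENNReal.ofReal_rpow_of_nonneg (by positivity) (by positivity),
      ← Real.rpow_mul hb.le, mul_one_div_cancel hp0.ne', Real.rpow_one]
  have hcontr : μ K ^ (1/r) < μ K ^ (1/r) := by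
    calc μ K ^ (1/r) ≤ ENNReal.ofReal C * μ (U ∩ Ω) ^ (1/p) := hkey
      _ < ENNReal.ofReal C * t ^ (1/p) := by
          rw [ENNReal.mul_lt_mul_iff_right (by simp [hC]) ENNReal.ofReal_ne_top]
          exact ENNReal.rpow_lt_rpow hU'lt (by positivity)
      _ = ENNReal.ofReal (a ^ (1/r)) := by
          rw [ht, ← ENNReal.ofReal_mul hC.le, mul_div_cancel₀ _ hC.ne']
      _ = μ K ^ (1/r) := hμK.symm
  exact absurd hcontr (lt_irrefl _)

private lemma rh_dichotomy {X : Type*} [MetricSpace X] [MeasurableSpace X] [BorelSpace X]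
    (μ : Measure X) [μ.Regular] (Ω : Set X) (hΩopen : IsOpen Ω)
    (hΩcpt : IsCompact (closure Ω))
    (p r : ℝ) (hp : 1 ≤ p) (hpr : p < r) (C : ℝ) (hC : 0 < C)
    (hrh : ∀ φ : X → ℝ, (∃ K : ℝ≥0, LipschitzWith K φ) →
      IsCompact (closure (Function.support φ)) →
      closure (Function.support φ) ⊆ Ω →
      eLpNorm φ (ENNReal.ofReal r) (μ.restrict Ω) ≤
        ENNReal.ofReal C * eLpNorm φ (ENNReal.ofReal p) (μ.restrict Ω))
    (A : Set X) (hA : MeasurableSet A) (hAΩ : A ⊆ Ω) :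
    μ A = 0 ∨ ENNReal.ofReal (C ^ (-(p*r)/(r-p))) ≤ μ A := by
  by_cases h0 : μ A = 0
  · exact Or.inl h0
  right
  have hfin : μ A ≠ ⊤ :=
    ((measure_mono (hAΩ.trans subset_closure)).trans_lt hΩcpt.measure_lt_top).ne
  have hε : μ A / 2 ≠ 0 := by
    simp only [ne_eq, ENNReal.div_eq_zero_iff, h0, false_or]
    exact ENNReal.ofNat_ne_top
  obtain ⟨K, hKA, hKcpt, hlt⟩ := hA.exists_isCompact_lt_add hfin hε
  have hK0 : μ K ≠ 0 := by
    intro hz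
    rw [hz, zero_add] at hlt
    exact absurd hlt (not_lt.2 (ENNReal.half_le_self))
  have := (rh_dichotomy_compact μ Ω hΩopen hΩcpt p r hp hpr C hC hrh K
    (hKA.trans hAΩ) hKcpt).resolve_left hK0
  exact this.trans (measure_mono hKA)

private lemma rh_finite_atoms {X : Type*} [MetricSpace X] [MeasurableSpace X] [BorelSpace X]
    (μ : Measure X) (Ω : Set X) (hΩcpt : IsCompact (closure Ω))
    [IsFiniteMeasureOnCompacts μ] (c0 : ℝ) (hc0 : 0 < c0)
    (S : Set X) (hSΩ : S ⊆ Ω)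
    (hSatom : ∀ x ∈ S, ENNReal.ofReal c0 ≤ μ {x}) : S.Finite := by
  by_contra hinf
  have hΩfin : μ (closure Ω) ≠ ⊤ := hΩcpt.measure_lt_top.ne
  have hc0' : (ENNReal.ofReal c0) ≠ 0 := by simp [hc0]
  obtain ⟨n, hn⟩ := ENNReal.exists_nat_gt
    (show μ (closure Ω) / ENNReal.ofReal c0 ≠ ⊤ from
      (ENNReal.div_lt_top hΩfin hc0').ne)
  rw [ENNReal.div_lt_iff (Or.inl hc0') (Or.inl ENNReal.ofReal_ne_top)] at hn
  obtain ⟨F, hFS, hFcard⟩ := (Set.Infinite.exists_subset_card_eq hinf n : _)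
  have hsum : μ (↑F : Set X) = ∑ x ∈ F, μ {x} := by
    rw [← Set.biUnion_of_singleton (↑F : Set X), Finset.set_biUnion_coe,
      measure_biUnion_finset]
    · intro x _ y _ hxy
      simp [Function.onFun, Set.disjoint_singleton, hxy]
    · exact fun x _ => measurableSet_singleton x
  have hlb : (n : ℝ≥0∞) * ENNReal.ofReal c0 ≤ μ (↑F : Set X) := by
    rw [hsum]
    calc (n : ℝ≥0∞) * ENNReal.ofReal c0 = ∑ _x ∈ F, ENNReal.ofReal c0 := by
          rw [Finset.sum_const, hFcard, nsmul_eq_mul]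
      _ ≤ ∑ x ∈ F, μ {x} := Finset.sum_le_sum fun x hx => hSatom x (hFS hx)
  have hub : μ (↑F : Set X) ≤ μ (closure Ω) :=
    measure_mono ((Set.Subset.trans hFS hSΩ).trans subset_closure)
  exact absurd ((hlb.trans hub)) (not_le.2 hn)

private lemma rh_null_complement {X : Type*} [MetricSpace X] [MeasurableSpace X] [BorelSpace X]
    (μ : Measure X) (Ω S : Set X) (hΩopen : IsOpen Ω)
    (hΩcpt : IsCompact (closure Ω)) [IsFiniteMeasureOnCompacts μ]
    (c0 : ℝ) (hc0 : 0 < c0) (hSmeas : MeasurableSet S)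
    (hdi : ∀ A : Set X, MeasurableSet A → A ⊆ Ω → μ A = 0 ∨ ENNReal.ofReal c0 ≤ μ A)
    (hS : ∀ x ∈ Ω \ S, μ {x} = 0) : μ (Ω \ S) = 0 := by
  set T := Ω \ S with hT
  have hTmeas : MeasurableSet T := hΩopen.measurableSet.diff hSmeas
  have hTΩ : T ⊆ Ω := Set.diff_subset
  have hball : ∀ x : X, ∃ ρ : ℝ, 0 < ρ ∧ μ (Metric.ball x ρ ∩ T) = 0 := by
    intro x
    set A : ℕ → Set X := fun n => Metric.ball x (1/(n+1)) ∩ T with hA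
    have hmeas : ∀ n, NullMeasurableSet (A n) μ :=
      fun n => (measurableSet_ball.inter hTmeas).nullMeasurableSet
    have hanti : Antitone A := by
      intro m n hmn
      apply Set.inter_subset_inter_left
      apply Metric.ball_subset_ball
      have h1 : (m:ℝ) + 1 ≤ (n:ℝ) + 1 := by
        have := (Nat.cast_le (α := ℝ)).2 hmn
        linarith
      exact one_div_le_one_div_of_le (by positivity) h1
    have hfinA : ∃ n, μ (A n) ≠ ⊤ := ⟨0,
      ((measure_mono (Set.inter_subset_right.trans (hTΩ.trans subset_closure))).trans_lt
        hΩcpt.measure_lt_top).ne⟩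
    have hiInter : (⋂ n, A n) = {x} ∩ T := by
      ext y
      simp only [hA, Set.mem_iInter, Set.mem_inter_iff, Metric.mem_ball,
        Set.mem_singleton_iff]
      constructor
      · intro h
        refine ⟨?_, (h 0).2⟩
        by_contra hne
        have hd : 0 < dist y x := dist_pos.2 hne
        obtain ⟨n, hn⟩ := exists_nat_one_div_lt hd
        exact absurd (h n).1 (not_lt.2 hn.le)
      · rintro ⟨rfl, hyT⟩ n
        refine ⟨by rw [dist_self]; positivity, hyT⟩
    have h0 : μ (⋂ n, A n) = 0 := by
      rw [hiInter]
      by_cases hx : x ∈ T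
      · exact measure_mono_null Set.inter_subset_left (hS x hx)
      · rw [Set.singleton_inter_eq_empty.2 hx, measure_empty]
    have htend := tendsto_measure_iInter_atTop hmeas hanti hfinA
    rw [h0] at htend
    have hev : ∀ᶠ n in atTop, μ (A n) < ENNReal.ofReal c0 :=
      htend.eventually_lt_const (by simp [hc0])
    obtain ⟨n, hn⟩ := hev.exists
    have hz := (hdi (A n) (measurableSet_ball.inter hTmeas)
      (Set.inter_subset_right.trans hTΩ)).resolve_right (not_le.2 hn)
    exact ⟨1/(n+1), by positivity, hz⟩
  choose ρ hρpos hρnull using hball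
  have hcover : closure Ω ⊆ ⋃ x : X, Metric.ball x (ρ x) :=
    fun y _ => Set.mem_iUnion.2 ⟨y, Metric.mem_ball_self (hρpos y)⟩
  obtain ⟨t, ht⟩ := hΩcpt.elim_finite_subcover (fun x : X => Metric.ball x (ρ x))
    (fun x => Metric.isOpen_ball) hcover
  have hsub : T ⊆ ⋃ x ∈ t, (Metric.ball x (ρ x) ∩ T) := by
    intro y hy
    obtain ⟨x, hx, hbx⟩ := Set.mem_iUnion₂.1 (ht ((hTΩ.trans subset_closure) hy))
    exact Set.mem_biUnion hx ⟨hbx, hy⟩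
  refine measure_mono_null hsub ?_
  exact (measure_biUnion_null_iff t.countable_toSet).2 fun x _ => hρnull x

private lemma rh_assemble {X : Type*} [MetricSpace X] [MeasurableSpace X] [BorelSpace X]
    (μ : Measure X) (Ω : Set X) [IsFiniteMeasureOnCompacts μ]
    (hΩcpt : IsCompact (closure Ω)) (c0 : ℝ)
    (S : Set X) (hSfin : S.Finite) (hSΩ : S ⊆ Ω)
    (hSatom : ∀ x ∈ S, ENNReal.ofReal c0 ≤ μ {x})
    (hnull : μ (Ω \ S) = 0) :
    ∃ (N : ℕ) (x : Fin N → X) (c : Fin N → ℝ),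
      (∀ i, x i ∈ Ω) ∧ (∀ i, c0 ≤ c i) ∧
      μ.restrict Ω = ∑ i : Fin N, ENNReal.ofReal (c i) • Measure.dirac (x i) := by
  classical
  have hΩfin : μ (closure Ω) ≠ ⊤ := hΩcpt.measure_lt_top.ne
  have hfinx : ∀ y ∈ S, μ {y} ≠ ⊤ := fun y hy =>
    ((measure_mono ((Set.singleton_subset_iff.2 (hSΩ hy)).trans subset_closure)).trans_lt
      hΩcpt.measure_lt_top).ne
  have hSmeas : MeasurableSet S := hSfin.measurableSet
  set F := hSfin.toFinset with hF
  have hmemF : ∀ y, y ∈ F ↔ y ∈ S := fun y => hSfin.mem_toFinset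
  set e := F.equivFin with he
  refine ⟨F.card, fun i => (e.symm i : X), fun i => (μ {(e.symm i : X)}).toReal, ?_, ?_, ?_⟩
  · intro i
    exact hSΩ ((hmemF _).1 (e.symm i).2)
  · intro i
    have hy : ((e.symm i : X)) ∈ S := (hmemF _).1 (e.symm i).2
    exact (ENNReal.ofReal_le_iff_le_toReal (hfinx _ hy)).1 (hSatom _ hy)
  · refine Measure.ext fun A hA => ?_
    rw [Measure.restrict_apply hA, Measure.finset_sum_apply]
    have hterm : ∀ i : Fin F.card,
        (ENNReal.ofReal ((μ {(e.symm i : X)}).toReal) • Measure.dirac (e.symm i : X)) A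
        = (fun y : X => if y ∈ A then μ {y} else 0) (e.symm i : X) := by
      intro i
      have hy : ((e.symm i : X)) ∈ S := (hmemF _).1 (e.symm i).2
      rw [Measure.smul_apply, smul_eq_mul, Measure.dirac_apply' _ hA,
        ENNReal.ofReal_toReal (hfinx _ hy)]
      simp [Set.indicator_apply]
    rw [Finset.sum_congr rfl (fun i _ => hterm i)]
    have hre : ∑ i : Fin F.card, (fun y : X => if y ∈ A then μ {y} else 0) (e.symm i : X)
        = ∑ y ∈ F, (if y ∈ A then μ {y} else 0) := by
      rw [← Finset.sum_coe_sort F (fun y => if y ∈ A then μ {y} else 0)]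
      exact Equiv.sum_comp e.symm (fun y : F => if (y : X) ∈ A then μ {(y : X)} else 0)
    rw [hre, ← Finset.sum_filter]
    have h1 : μ (A ∩ Ω) = μ ((A ∩ Ω) ∩ S) + μ ((A ∩ Ω) \ S) :=
      (measure_inter_add_diff _ hSmeas).symm
    have h2 : μ ((A ∩ Ω) \ S) = 0 :=
      measure_mono_null (Set.diff_subset_diff_left Set.inter_subset_right) hnull
    have h3 : (A ∩ Ω) ∩ S = ↑(F.filter (· ∈ A)) := by
      ext y
      constructor
      · rintro ⟨⟨hyA, _⟩, hyS⟩
        exact Finset.mem_coe.2 (Finset.mem_filter.2 ⟨(hmemF y).2 hyS, hyA⟩)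
      · intro hy
        obtain ⟨hyF, hyA⟩ := Finset.mem_filter.1 (Finset.mem_coe.1 hy)
        exact ⟨⟨hyA, hSΩ ((hmemF y).1 hyF)⟩, (hmemF y).1 hyF⟩
    rw [h1, h2, add_zero, h3, ← Set.biUnion_of_singleton
      (↑(F.filter (· ∈ A)) : Set X), Finset.set_biUnion_coe, measure_biUnion_finset]
    · intro a _ b _ hab
      simp [Function.onFun, Set.disjoint_singleton, hab]
    · exact fun a _ => measurableSet_singleton a

/-- Step 1 of Lemma 3.1: in a locally compact metric space with a
Radon measure `μ` and a precompact open `Ω`, if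
`‖φ‖_{L^r(Ω,μ)} ≤ C ‖φ‖_{L^p(Ω,μ)}` for all Lipschitz `φ` compactly supported
in `Ω` and `1 ≤ p < r`, then `μ` on `Ω` is a finite sum of point masses of
weight at least `C^{-pr/(r-p)}`; in particular every Borel `A ⊆ Ω` has
`μ A = 0` or `μ A ≥ C^{-pr/(r-p)}`. -/
theorem reverse_holder_same_measure_finite_atomic
    {X : Type*} [MetricSpace X] [LocallyCompactSpace X]
    [MeasurableSpace X] [BorelSpace X]
    (μ : Measure X) [μ.Regular]
    (Ω : Set X) (hΩopen : IsOpen Ω) (hΩcpt : IsCompact (closure Ω))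
    (p r : ℝ) (hp : 1 ≤ p) (hpr : p < r)
    (C : ℝ) (hC : 0 < C)
    (hrh : ∀ φ : X → ℝ, (∃ K : ℝ≥0, LipschitzWith K φ) →
      IsCompact (closure (Function.support φ)) →
      closure (Function.support φ) ⊆ Ω →
      eLpNorm φ (ENNReal.ofReal r) (μ.restrict Ω) ≤
        ENNReal.ofReal C * eLpNorm φ (ENNReal.ofReal p) (μ.restrict Ω)) :
    (∃ (N : ℕ) (x : Fin N → X) (c : Fin N → ℝ),
      (∀ i, x i ∈ Ω) ∧ (∀ i, C ^ (-(p * r) / (r - p)) ≤ c i) ∧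
      μ.restrict Ω = ∑ i : Fin N, ENNReal.ofReal (c i) • Measure.dirac (x i)) ∧
    ∀ A : Set X, MeasurableSet A → A ⊆ Ω →
      μ A = 0 ∨ ENNReal.ofReal (C ^ (-(p * r) / (r - p))) ≤ μ A := by
  have hdi : ∀ A : Set X, MeasurableSet A → A ⊆ Ω →
      μ A = 0 ∨ ENNReal.ofReal (C ^ (-(p * r) / (r - p))) ≤ μ A :=
    fun A hA hAΩ => rh_dichotomy μ Ω hΩopen hΩcpt p r hp hpr C hC hrh A hA hAΩ
  refine ⟨?_, hdi⟩
  set c0 : ℝ := C ^ (-(p * r) / (r - p)) with hc0_def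
  have hc0 : 0 < c0 := Real.rpow_pos_of_pos hC _
  set S : Set X := {x | x ∈ Ω ∧ μ {x} ≠ 0} with hS_def
  have hSΩ : S ⊆ Ω := fun x hx => hx.1
  have hSatom : ∀ x ∈ S, ENNReal.ofReal c0 ≤ μ {x} := fun x hx =>
    (hdi {x} (measurableSet_singleton x) (Set.singleton_subset_iff.2 hx.1)).resolve_left hx.2
  have hSfin : S.Finite := rh_finite_atoms μ Ω hΩcpt c0 hc0 S hSΩ hSatom
  have hS0 : ∀ x ∈ Ω \ S, μ {x} = 0 := by
    intro x hx
    by_contra hne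
    exact hx.2 ⟨hx.1, hne⟩
  have hnull : μ (Ω \ S) = 0 :=
    rh_null_complement μ Ω S hΩopen hΩcpt c0 hc0 hSfin.measurableSet hdi hS0
  exact rh_assemble μ Ω hΩcpt c0 S hSfin hSΩ hSatom hnull
end

section
/- Let (X,d) be a locally compact metric space, Ω ⊆ X an open precompact subset, and μ, ν Radon measures on Ω. Let 1 ≤ p < r < ∞ and suppose there exists C > 0 such that ‖φ‖_{L^r(Ω,μ)} ≤ C‖φ‖_{L^p(Ω,ν)} for every Lipschitz function φ : Ω → ℝ with compact support in Ω. Write the Lebesgue decomposition ν = μ⌊θ + σ, where θ ∈ L^1(Ω,μ) is nonnegative, μ⌊θ(A) = ∫_A θ dμ, and σ is a positive measure singular with respect to μ. Then μ({x ∈ Ω : θ(x) = 0}) = 0. -/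
open MeasureTheory ENNReal NNReal Filter Topology Metric Set

/-- Step 2 of Lemma 3.1: with the reverse Hölder hypothesis
`‖φ‖_{L^r(Ω,μ)} ≤ C ‖φ‖_{L^p(Ω,ν)}` for all Lipschitz `φ` compactly supported
in the precompact open `Ω`, and a Lebesgue decomposition `ν = μ⌊θ + σ` on `Ω`
with `σ ⟂ μ`, the set `{θ = 0}` is `μ`-null in `Ω`. -/
theorem reverse_holder_density_positive
    {X : Type*} [MetricSpace X] [LocallyCompactSpace X]
    [MeasurableSpace X] [BorelSpace X]
    (μ ν : Measure X) [μ.Regular] [ν.Regular]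
    (Ω : Set X) (hΩopen : IsOpen Ω) (hΩcpt : IsCompact (closure Ω))
    (p r : ℝ) (hp : 1 ≤ p) (hpr : p < r)
    (C : ℝ) (hC : 0 < C)
    (hrh : ∀ φ : X → ℝ, (∃ K : ℝ≥0, LipschitzWith K φ) →
      IsCompact (closure (Function.support φ)) →
      closure (Function.support φ) ⊆ Ω →
      eLpNorm φ (ENNReal.ofReal r) (μ.restrict Ω) ≤
        ENNReal.ofReal C * eLpNorm φ (ENNReal.ofReal p) (ν.restrict Ω))
    (θ : X → ℝ) (hθ0 : ∀ x, 0 ≤ θ x) (hθmeas : Measurable θ)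
    (hθint : Integrable θ (μ.restrict Ω))
    (σ : Measure X)
    (hsing : σ ⟂ₘ μ.restrict Ω)
    (hdecomp : ν.restrict Ω =
      (μ.restrict Ω).withDensity (fun x => ENNReal.ofReal (θ x)) + σ) :
    (μ.restrict Ω) {x | θ x = 0} = 0 := by
  have hp0 : (0:ℝ) < p := lt_of_lt_of_le one_pos hp
  have hr0 : (0:ℝ) < r := hp0.trans hpr
  obtain ⟨s, hsmeas, hσs, hμs⟩ := hsing
  have hθms : MeasurableSet {x | θ x = 0} := hθmeas (measurableSet_singleton 0)
  set A : Set X := {x | θ x = 0} ∩ s ∩ Ω with hAdef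
  have hAmeas : MeasurableSet A := (hθms.inter hsmeas).inter hΩopen.measurableSet
  have hAΩ : A ⊆ Ω := fun x hx => hx.2
  -- ν A = 0
  have hνA : ν A = 0 := by
    have h1 : ν.restrict Ω A = 0 := by
      rw [hdecomp, Measure.add_apply, withDensity_apply _ hAmeas]
      have h2 : σ A = 0 :=
        measure_mono_null (fun x hx => hx.1.2) hσs
      have h3 : ∫⁻ x in A, ENNReal.ofReal (θ x) ∂(μ.restrict Ω) = 0 := by
        rw [setLIntegral_congr_fun hAmeas
          ((fun x hx => by simp [show θ x = 0 from hx.1.1]) :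
            EqOn (fun x => ENNReal.ofReal (θ x)) (fun _ => (0:ℝ≥0∞)) A)]
        simp
      rw [h2, h3, add_zero]
    rwa [Measure.restrict_apply hAmeas, Set.inter_eq_self_of_subset_left hAΩ] at h1
  -- key: compact subsets of A are μ-null
  have key : ∀ K : Set X, IsCompact K → K ⊆ A → (μ.restrict Ω) K = 0 := by
    intro K hK hKA
    rcases K.eq_empty_or_nonempty with rfl | hKne
    · simp
    have hKΩ : K ⊆ Ω := hKA.trans hAΩ
    have main : ∀ ε : ℝ, 0 < ε →
        ((μ.restrict Ω) K) ^ (1/r) ≤ ENNReal.ofReal C * ENNReal.ofReal (ε ^ (1/p)) := by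
      intro ε hε
      -- open set U ⊇ A with small ν measure
      obtain ⟨U, hAU, hUopen, hνU⟩ := Set.exists_isOpen_lt_of_lt A (ENNReal.ofReal ε)
        (by rw [hνA]; exact ENNReal.ofReal_pos.2 hε)
      set V : Set X := U ∩ Ω with hVdef
      have hVopen : IsOpen V := hUopen.inter hΩopen
      have hKV : K ⊆ V := fun x hx => ⟨hAU (hKA hx), hKΩ hx⟩
      obtain ⟨δ, hδ0, hδV⟩ := hK.exists_thickening_subset_open hVopen hKV
      set c : ℝ := 2 / δ with hcdef
      have hc0 : 0 < c := by positivity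
      set φ : X → ℝ := fun x => max (1 - c * infDist x K) 0 with hφdef
      -- Lipschitz
      have hlip : LipschitzWith (Real.toNNReal c) φ := by
        apply LipschitzWith.of_dist_le_mul
        intro x y
        have h1 : dist (φ x) (φ y) ≤ dist (1 - c * infDist x K) (1 - c * infDist y K) := by
          rw [Real.dist_eq, Real.dist_eq]
          exact abs_max_sub_max_le_abs _ _ 0
        have h2 : dist (1 - c * infDist x K) (1 - c * infDist y K)
            = c * dist (infDist x K) (infDist y K) := by
          rw [Real.dist_eq, Real.dist_eq,
            show (1 - c * infDist x K) - (1 - c * infDist y K)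
              = c * (infDist y K - infDist x K) by ring,
            abs_mul, abs_of_pos hc0, abs_sub_comm]
        have h3 : dist (infDist x K) (infDist y K) ≤ dist x y := by
          simpa using (lipschitz_infDist_pt K).dist_le_mul x y
        calc dist (φ x) (φ y) ≤ c * dist (infDist x K) (infDist y K) := h1.trans_eq h2
          _ ≤ c * dist x y := by gcongr
          _ = (Real.toNNReal c) * dist x y := by
              rw [Real.coe_toNNReal _ hc0.le]
      have hφ0 : ∀ x, 0 ≤ φ x := fun x => le_max_right _ _
      have hφ1 : ∀ x, φ x ≤ 1 := by
        intro x
        apply max_le _ zero_le_one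
        have : 0 ≤ c * infDist x K := mul_nonneg hc0.le (infDist_nonneg)
        linarith
      have hφK : ∀ x ∈ K, φ x = 1 := by
        intro x hx
        simp [hφdef, infDist_zero_of_mem hx]
      -- support
      have hsupp : Function.support φ ⊆ thickening (δ/2) K := by
        intro x hx
        rw [mem_thickening_iff_infDist_lt hKne]
        by_contra h
        push_neg at h
        have : 1 - c * infDist x K ≤ 0 := by
          have : c * (δ/2) ≤ c * infDist x K := by gcongr
          have hcd : c * (δ/2) = 1 := by rw [hcdef]; field_simp
          linarith
        exact hx (max_eq_right this)
      have hsuppcl : closure (Function.support φ) ⊆ V := by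
        refine (closure_mono hsupp).trans ?_
        refine (closure_thickening_subset_cthickening _ _).trans ?_
        exact (cthickening_subset_thickening' hδ0 (by linarith) K).trans hδV
      have hsuppΩ : closure (Function.support φ) ⊆ Ω :=
        hsuppcl.trans (Set.inter_subset_right)
      have hsuppcpt : IsCompact (closure (Function.support φ)) :=
        hΩcpt.of_isClosed_subset isClosed_closure (hsuppΩ.trans subset_closure)
      have hineq := hrh φ ⟨_, hlip⟩ hsuppcpt hsuppΩ
      -- lower bound for LHS
      have hrne0 : ENNReal.ofReal r ≠ 0 := by
        simp [ENNReal.ofReal_eq_zero, not_le, hr0]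
      have hpne0 : ENNReal.ofReal p ≠ 0 := by
        simp [ENNReal.ofReal_eq_zero, not_le, hp0]
      have hLHS : ((μ.restrict Ω) K) ^ (1/r) ≤ eLpNorm φ (ENNReal.ofReal r) (μ.restrict Ω) := by
        have hmono : eLpNorm (K.indicator fun _ => (1:ℝ)) (ENNReal.ofReal r) (μ.restrict Ω)
            ≤ eLpNorm φ (ENNReal.ofReal r) (μ.restrict Ω) := by
          apply eLpNorm_mono
          intro x
          by_cases hx : x ∈ K
          · simp [Set.indicator_of_mem hx, hφK x hx]
          · simp [Set.indicator_of_notMem hx, abs_nonneg]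
        rw [eLpNorm_indicator_const hK.measurableSet hrne0 ENNReal.ofReal_ne_top,
          ENNReal.toReal_ofReal hr0.le] at hmono
        simpa using hmono
      have hRHS : eLpNorm φ (ENNReal.ofReal p) (ν.restrict Ω)
          ≤ ENNReal.ofReal (ε ^ (1/p)) := by
        have hmono : eLpNorm φ (ENNReal.ofReal p) (ν.restrict Ω)
            ≤ eLpNorm (V.indicator fun _ => (1:ℝ)) (ENNReal.ofReal p) (ν.restrict Ω) := by
          apply eLpNorm_mono
          intro x
          by_cases hx : x ∈ V
          · rw [Set.indicator_of_mem hx]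
            simp only [Real.norm_eq_abs, abs_of_nonneg (hφ0 x)]
            simpa using hφ1 x
          · have : φ x = 0 := by
              by_contra h
              exact hx (hδV ((thickening_mono (by linarith) K) (hsupp h)))
            simp [Set.indicator_of_notMem hx, this]
        refine hmono.trans ?_
        rw [eLpNorm_indicator_const hVopen.measurableSet hpne0 ENNReal.ofReal_ne_top,
          ENNReal.toReal_ofReal hp0.le]
        have hνV : (ν.restrict Ω) V ≤ ENNReal.ofReal ε := by
          calc (ν.restrict Ω) V ≤ ν V := Measure.restrict_le_self _
            _ ≤ ν U := measure_mono Set.inter_subset_left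
            _ ≤ ENNReal.ofReal ε := hνU.le
        calc (‖(1:ℝ)‖₊ : ℝ≥0∞) * (ν.restrict Ω) V ^ (1/p)
            = ((ν.restrict Ω) V) ^ (1/p) := by simp
          _ ≤ (ENNReal.ofReal ε) ^ (1/p) := ENNReal.rpow_le_rpow hνV (by positivity)
          _ = ENNReal.ofReal (ε ^ (1/p)) := ENNReal.ofReal_rpow_of_pos hε
      calc ((μ.restrict Ω) K) ^ (1/r) ≤ eLpNorm φ (ENNReal.ofReal r) (μ.restrict Ω) := hLHS
        _ ≤ ENNReal.ofReal C * eLpNorm φ (ENNReal.ofReal p) (ν.restrict Ω) := hineq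
        _ ≤ ENNReal.ofReal C * ENNReal.ofReal (ε ^ (1/p)) := by gcongr
    -- take ε → 0
    have hlim : Tendsto (fun ε : ℝ => ENNReal.ofReal C * ENNReal.ofReal (ε ^ (1/p)))
        (𝓝[>] (0:ℝ)) (𝓝 0) := by
      have h1 : Tendsto (fun ε : ℝ => ε ^ (1/p)) (𝓝 (0:ℝ)) (𝓝 0) := by
        have ht := (Real.continuousAt_rpow_const 0 (1/p) (Or.inr (by positivity))).tendsto
        rwa [Real.zero_rpow (by positivity : (1:ℝ)/p ≠ 0)] at ht
      have hreal : Tendsto (fun ε : ℝ => C * ε ^ (1/p)) (𝓝 (0:ℝ)) (𝓝 0) := by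
        simpa using (tendsto_const_nhds (x := C)).mul h1
      have h2 : Tendsto (fun ε : ℝ => ENNReal.ofReal (C * ε ^ (1/p))) (𝓝 (0:ℝ)) (𝓝 0) := by
        simpa [Function.comp_def] using (ENNReal.continuous_ofReal.tendsto 0).comp hreal
      exact (h2.congr (fun ε => ENNReal.ofReal_mul hC.le)).mono_left nhdsWithin_le_nhds
    have hle : ((μ.restrict Ω) K) ^ (1/r) ≤ 0 := by
      refine ge_of_tendsto hlim ?_
      filter_upwards [self_mem_nhdsWithin] with ε hε
      exact main ε hε
    have : ((μ.restrict Ω) K) ^ (1/r) = 0 := le_antisymm hle zero_le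
    rcases ENNReal.rpow_eq_zero_iff.1 this with ⟨h, _⟩ | ⟨_, h⟩
    · exact h
    · exact absurd h (not_lt.2 (by positivity))
  -- inner regularity
  have hAfin : (μ.restrict Ω) A ≠ ∞ := by
    refine ne_of_lt (lt_of_le_of_lt ?_ (hΩcpt.measure_lt_top (μ := μ)))
    rw [Measure.restrict_apply hAmeas]
    exact measure_mono ((Set.inter_subset_right).trans subset_closure)
  have hμA : (μ.restrict Ω) A = 0 := by
    refine le_antisymm ?_ zero_le
    refine ENNReal.le_of_forall_pos_le_add fun ε hε _ => ?_
    obtain ⟨K, hKA, hKcpt, hlt⟩ := hAmeas.exists_isCompact_lt_add hAfin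
      (ε := ε) (by exact_mod_cast hε.ne')
    rw [key K hKcpt hKA, zero_add] at hlt
    simpa using hlt.le
  -- conclude
  rw [Measure.restrict_apply hθms]
  refine le_antisymm ?_ zero_le
  calc μ ({x | θ x = 0} ∩ Ω) ≤ μ ((A ∪ sᶜ) ∩ Ω) := by
        apply measure_mono
        rintro x ⟨hx1, hx2⟩
        by_cases hxs : x ∈ s
        · exact ⟨Or.inl ⟨⟨hx1, hxs⟩, hx2⟩, hx2⟩
        · exact ⟨Or.inr hxs, hx2⟩
    _ = (μ.restrict Ω) (A ∪ sᶜ) := (Measure.restrict_apply (hAmeas.union hsmeas.compl)).symm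
    _ ≤ (μ.restrict Ω) A + (μ.restrict Ω) sᶜ := measure_union_le _ _
    _ = 0 := by rw [hμA, hμs, add_zero]
end
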